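/- Let w = (wₙ)ₙ be a sequence of positive reals with wₙ → 0, and let B_w be the unilateral weighted backward shift on ℓ_∞. If f ∈ ℓ_∞ \ c_∞, then B_w restricted to span{f} ⊕ c_∞ maps into c₀, and B_w : span{f} ⊕ c_∞ → span{f} ⊕ c_∞ is not cyclic. -/

import Mathlib

open Filter Topology

/-- The subspace `c_∞` of `ℓ_∞ = ℓ_∞(ℕ)` of convergent sequences. -/
noncomputable def cInfN : Submodule ℂ (BoundedContinuousFunction ℕ ℂ) where
  carrier := {f | ∃ L : ℂ, Tendsto (fun n : ℕ => f n) atTop (nhds L)}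
  zero_mem' := ⟨0, tendsto_const_nhds⟩
  add_mem' := by
    rintro f g ⟨L, hL⟩ ⟨M, hM⟩
    exact ⟨L + M, by simpa using hL.add hM⟩
  smul_mem' := by
    rintro c f ⟨L, hL⟩
    exact ⟨c • L, by simpa [smul_eq_mul] using hL.const_mul c⟩

/-- The subspace `c₀` of `ℓ_∞(ℕ)` of null sequences. -/
noncomputable def cZeroN : Submodule ℂ (BoundedContinuousFunction ℕ ℂ) where
  carrier := {f | Tendsto (fun n : ℕ => f n) atTop (nhds 0)}
  zero_mem' := tendsto_const_nhds
  add_mem' := by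
    intro f g hf hg
    simpa using hf.add hg
  smul_mem' := by
    intro c f hf
    simpa [smul_eq_mul] using hf.const_mul c

lemma mem_cZeroN_iff (f : BoundedContinuousFunction ℕ ℂ) :
    f ∈ cZeroN ↔ Tendsto (fun n : ℕ => f n) atTop (nhds 0) := Iff.rfl

lemma isClosed_cZeroN : IsClosed ((cZeroN : Submodule ℂ (BoundedContinuousFunction ℕ ℂ)) :
    Set (BoundedContinuousFunction ℕ ℂ)) := by
  refine isClosed_of_closure_subset ?_
  intro x hx
  rw [SetLike.mem_coe, mem_cZeroN_iff, NormedAddCommGroup.tendsto_nhds_zero]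
  intro ε hε
  obtain ⟨g, hg, hdist⟩ := Metric.mem_closure_iff.1 hx (ε / 2) (by linarith)
  have hg' : Tendsto (fun n : ℕ => g n) atTop (nhds 0) := hg
  have := (NormedAddCommGroup.tendsto_nhds_zero.1 hg') (ε / 2) (by linarith)
  filter_upwards [this] with n hn
  calc ‖x n‖ = ‖(x n - g n) + g n‖ := by ring_nf
    _ ≤ ‖x n - g n‖ + ‖g n‖ := norm_add_le _ _
    _ = dist (x n) (g n) + ‖g n‖ := by rw [dist_eq_norm]
    _ ≤ dist x g + ‖g n‖ := by
        have := BoundedContinuousFunction.dist_coe_le_dist (f := x) (g := g) n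
        linarith
    _ < ε / 2 + ε / 2 := by linarith
    _ = ε := by ring

set_option maxHeartbeats 1000000 in
set_option synthInstance.maxHeartbeats 400000 in
/-- let `w = (wₙ)` be positive reals with `wₙ → 0` and `B_w` the unilateral
weighted backward shift `(B_w x)ₙ = w_{n+1} x_{n+1}` on `ℓ_∞`. If `f ∈ ℓ_∞ \ c_∞`, then
`B_w` maps `span{f} ⊕ c_∞` into `c₀`, and `B_w : span{f} ⊕ c_∞ → span{f} ⊕ c_∞` is not
cyclic. -/
theorem weighted_backward_shift_on_span_oplus_cInf_not_cyclic
    (w : ℕ → ℝ) (hwpos : ∀ n, 0 < w n) (hw0 : Tendsto w atTop (nhds 0))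
    (Bw : BoundedContinuousFunction ℕ ℂ →ₗ[ℂ] BoundedContinuousFunction ℕ ℂ)
    (hBw : ∀ (x : BoundedContinuousFunction ℕ ℂ) (n : ℕ),
      (Bw x) n = (w (n + 1) : ℂ) * x (n + 1))
    (f : BoundedContinuousFunction ℕ ℂ) (hf : f ∉ cInfN) :
    (∀ g ∈ (Submodule.span ℂ {f} ⊔ cInfN), Bw g ∈ cZeroN) ∧
    (∀ S : ↥(Submodule.span ℂ {f} ⊔ cInfN) →ₗ[ℂ] ↥(Submodule.span ℂ {f} ⊔ cInfN),
      (∀ x : ↥(Submodule.span ℂ {f} ⊔ cInfN),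
        ((S x : BoundedContinuousFunction ℕ ℂ)) = Bw (x : BoundedContinuousFunction ℕ ℂ)) →
      ¬ ∃ g : ↥(Submodule.span ℂ {f} ⊔ cInfN),
        Dense (↑(Submodule.span ℂ (Set.range fun n : ℕ => (S ^ n) g)) :
          Set ↥(Submodule.span ℂ {f} ⊔ cInfN))) := by
  -- Part 1: Bw maps everything into c₀
  have h1 : ∀ x : BoundedContinuousFunction ℕ ℂ, Bw x ∈ cZeroN := by
    intro x
    rw [mem_cZeroN_iff]
    rw [NormedAddCommGroup.tendsto_nhds_zero]
    intro ε hε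
    have hx : ∀ n : ℕ, ‖x n‖ ≤ ‖x‖ + 1 := fun n =>
      (x.norm_coe_le_norm n).trans (by linarith)
    have hden : (0:ℝ) < ‖x‖ + 1 := by positivity
    have hw' : Tendsto (fun n : ℕ => w (n + 1)) atTop (nhds 0) :=
      hw0.comp (tendsto_add_atTop_nat 1)
    have := (Metric.tendsto_nhds.1 hw') (ε / (‖x‖ + 1)) (by positivity)
    filter_upwards [this] with n hn
    have hwn : |w (n + 1)| < ε / (‖x‖ + 1) := by
      simpa [Real.dist_eq] using hn
    have hwn' : w (n + 1) < ε / (‖x‖ + 1) := lt_of_abs_lt hwn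
    have hnorm : ‖(Bw x) n‖ = w (n + 1) * ‖x (n + 1)‖ := by
      rw [hBw x n, norm_mul, Complex.norm_real, Real.norm_eq_abs,
        abs_of_pos (hwpos (n + 1))]
    rw [hnorm]
    calc w (n + 1) * ‖x (n + 1)‖ ≤ w (n + 1) * (‖x‖ + 1) :=
          mul_le_mul_of_nonneg_left (hx (n + 1)) (hwpos (n + 1)).le
      _ < (ε / (‖x‖ + 1)) * (‖x‖ + 1) := mul_lt_mul_of_pos_right hwn' hden
      _ = ε := div_mul_cancel₀ ε hden.ne'
  refine ⟨fun g _ => h1 g, ?_⟩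
  set M : Submodule ℂ (BoundedContinuousFunction ℕ ℂ) :=
    Submodule.span ℂ {f} ⊔ cInfN with hM
  intro S hS hcyc
  obtain ⟨g, hdense⟩ := hcyc
  -- C = c₀ pulled back to ↥M
  set C : Submodule ℂ ↥M := cZeroN.comap M.subtype with hC
  have hCclosed : IsClosed (C : Set ↥M) := by
    have : (C : Set ↥M) = (Subtype.val : ↥M → BoundedContinuousFunction ℕ ℂ) ⁻¹'
        (cZeroN : Set (BoundedContinuousFunction ℕ ℂ)) := rfl
    rw [this]
    exact isClosed_cZeroN.preimage continuous_subtype_val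
  set N : Submodule ℂ ↥M := Submodule.span ℂ {g} ⊔ C with hN
  haveI : IsClosed (C : Set ↥M) := hCclosed
  haveI : NormedAddCommGroup (↥M ⧸ C) := Submodule.Quotient.normedAddCommGroup C
  haveI : T2Space (↥M ⧸ C) := inferInstance
  have hmkQcont : Continuous C.mkQ := by
    refine AddMonoidHomClass.continuous_of_bound C.mkQ 1 fun x => ?_
    rw [one_mul]; exact Submodule.Quotient.norm_mk_le C x
  set D : Submodule ℂ (↥M ⧸ C) := (Submodule.span ℂ {g}).map C.mkQ with hD
  haveI : FiniteDimensional ℂ D := Module.Finite.map _ _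
  have hDclosed : IsClosed (D : Set (↥M ⧸ C)) := Submodule.closed_of_finiteDimensional D
  have hNcomap : N = D.comap C.mkQ := by
    rw [hD, Submodule.comap_map_eq, Submodule.ker_mkQ, hN]
  have hNclosed : IsClosed (N : Set ↥M) := by
    have : (N : Set ↥M) = C.mkQ ⁻¹' (D : Set (↥M ⧸ C)) := by rw [hNcomap]; rfl
    rw [this]
    exact hDclosed.preimage hmkQcont
  -- the orbit span is contained in N
  have horb : Submodule.span ℂ (Set.range fun n : ℕ => (S ^ n) g) ≤ N := by
    rw [Submodule.span_le]
    rintro - ⟨n, rfl⟩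
    cases n with
    | zero =>
        exact Submodule.mem_sup_left (by
          simpa using Submodule.mem_span_singleton_self g)
    | succ n =>
        refine Submodule.mem_sup_right ?_
        have hpow : (S ^ (n + 1)) g = S ((S ^ n) g) := by
          rw [pow_succ', Module.End.mul_apply]
        show (S ^ (n + 1)) g ∈ C
        rw [hpow]
        have : (↑(S ((S ^ n) g)) : BoundedContinuousFunction ℕ ℂ) ∈ cZeroN := by
          rw [hS]; exact h1 _
        exact this
  -- N is dense and closed, hence everything
  have hNall : ∀ v : ↥M, v ∈ N := by
    intro v
    have hcl : closure ((Submodule.span ℂ (Set.range fun n : ℕ => (S ^ n) g)) : Set ↥M)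
        = Set.univ := hdense.closure_eq
    have h2 : closure ((Submodule.span ℂ (Set.range fun n : ℕ => (S ^ n) g)) : Set ↥M)
        ⊆ (N : Set ↥M) := closure_minimal horb hNclosed
    exact h2 (hcl ▸ Set.mem_univ v)
  -- f and 1 as elements of ↥M
  have hfM : f ∈ M := Submodule.mem_sup_left (Submodule.mem_span_singleton_self f)
  have honeM : (1 : BoundedContinuousFunction ℕ ℂ) ∈ M := by
    refine Submodule.mem_sup_right ?_
    exact ⟨1, by simpa using (tendsto_const_nhds : Tendsto (fun _ : ℕ => (1:ℂ)) atTop _)⟩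
  obtain ⟨y₁, hy₁, z₁, hz₁, hsum₁⟩ := Submodule.mem_sup.1 (hNall ⟨f, hfM⟩)
  obtain ⟨y₂, hy₂, z₂, hz₂, hsum₂⟩ := Submodule.mem_sup.1 (hNall ⟨(1 : _), honeM⟩)
  obtain ⟨β₁, rfl⟩ := Submodule.mem_span_singleton.1 hy₁
  obtain ⟨β₂, rfl⟩ := Submodule.mem_span_singleton.1 hy₂
  have hz₁' : (↑z₁ : BoundedContinuousFunction ℕ ℂ) ∈ cZeroN := hz₁
  have hz₂' : (↑z₂ : BoundedContinuousFunction ℕ ℂ) ∈ cZeroN := hz₂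
  have heq₁ : f = β₁ • (↑g : BoundedContinuousFunction ℕ ℂ) + ↑z₁ := by
    have := congrArg (Subtype.val) hsum₁
    simpa using this.symm
  have heq₂ : (1 : BoundedContinuousFunction ℕ ℂ) =
      β₂ • (↑g : BoundedContinuousFunction ℕ ℂ) + ↑z₂ := by
    have := congrArg (Subtype.val) hsum₂
    simpa using this.symm
  have hsubset : cZeroN ≤ cInfN := fun x hx => ⟨0, hx⟩
  have honeInf : (1 : BoundedContinuousFunction ℕ ℂ) ∈ cInfN :=
    ⟨1, by simpa using (tendsto_const_nhds : Tendsto (fun _ : ℕ => (1:ℂ)) atTop _)⟩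
  by_cases hβ₂ : β₂ = 0
  · -- then 1 ∈ c₀, contradiction
    rw [hβ₂, zero_smul, zero_add] at heq₂
    have h0 : Tendsto (fun n : ℕ => (1 : BoundedContinuousFunction ℕ ℂ) n) atTop (nhds 0) := by
      rw [heq₂]; exact hz₂'
    have h10 : (fun n : ℕ => (1 : BoundedContinuousFunction ℕ ℂ) n) = fun _ => (1:ℂ) := by
      funext n; simp
    rw [h10] at h0
    exact one_ne_zero (tendsto_nhds_unique tendsto_const_nhds h0)
  · -- then g ∈ c_∞, so f ∈ c_∞, contradiction
    have hgInf : (↑g : BoundedContinuousFunction ℕ ℂ) ∈ cInfN := by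
      have hg : (↑g : BoundedContinuousFunction ℕ ℂ) =
          β₂⁻¹ • ((1 : BoundedContinuousFunction ℕ ℂ) - ↑z₂) := by
        rw [heq₂, add_sub_cancel_right, smul_smul, inv_mul_cancel₀ hβ₂, one_smul]
      rw [hg]
      exact Submodule.smul_mem _ _ (Submodule.sub_mem _ honeInf (hsubset hz₂'))
    exact hf (heq₁ ▸ Submodule.add_mem _ (Submodule.smul_mem _ _ hgInf) (hsubset hz₁'))
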